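/- Suppose additionally y ∈ A and λ ∈ F satisfy hy − yh = λy. Then for every a ∈ F and every s ∈ ℕ, (y^s ⊗ 1) · F_a = F_{a−sλ} · (y^s ⊗ 1) in (A ⊗_F A)[[t]]. (This is identity (3.9) of the paper's Lemma 3.3, proved there for y = D_K(x^α) ∈ U(𝐊) with λ = α_k − α_{−k}; only the stated commutation relations are used.) -/

import Mathlib

open scoped TensorProduct

/-- Rising factorial `x_a^{⟨m⟩} := (x+a)(x+a+1)⋯(x+a+m-1)` in an `F`-algebra `A`. -/
def risePow {F A : Type*} [Field F] [Ring A] [Algebra F A] (x : A) (a : F) : ℕ → A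
  | 0 => 1
  | m + 1 => risePow x a m * (x + algebraMap F A (a + (m : F)))

/-- `F_a = Σ_{r≥0} (1/r!) (h_a^{⟨r⟩} ⊗ e^r) t^r ∈ (A ⊗ A)[[t]]`. -/
noncomputable def capF {F A : Type*} [Field F] [Ring A] [Algebra F A] (h e : A) (a : F) :
    PowerSeries (A ⊗[F] A) :=
  PowerSeries.mk fun r => ((r.factorial : F))⁻¹ • (risePow h a r ⊗ₜ[F] e ^ r)

private lemma y_mul_shift {F A : Type*} [Field F] [Ring A] [Algebra F A]
    (h y : A) (lam : F) (hy : h * y - y * h = lam • y) (c : F) :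
    y * (h + algebraMap F A c) = (h + algebraMap F A (c - lam)) * y := by
  have h1 : y * h = h * y - lam • y := by rw [← hy]; abel
  rw [mul_add, add_mul, h1, map_sub, sub_mul, Algebra.smul_def,
    Algebra.commutes c y]
  abel

private lemma ypow_mul_shift {F A : Type*} [Field F] [Ring A] [Algebra F A]
    (h y : A) (lam : F) (hy : h * y - y * h = lam • y) (c : F) (s : ℕ) :
    y ^ s * (h + algebraMap F A c) = (h + algebraMap F A (c - s * lam)) * y ^ s := by
  induction s with
  | zero => simp
  | succ n ih =>
    rw [pow_succ', mul_assoc, ih, ← mul_assoc, y_mul_shift h y lam hy, mul_assoc,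
      ← pow_succ']
    congr 3
    push_cast
    ring

private lemma ypow_mul_risePow {F A : Type*} [Field F] [Ring A] [Algebra F A]
    (h y : A) (lam : F) (hy : h * y - y * h = lam • y) (a : F) (s r : ℕ) :
    y ^ s * risePow h a r = risePow h (a - s * lam) r * y ^ s := by
  induction r with
  | zero => simp [risePow]
  | succ m ih =>
    rw [risePow, risePow, ← mul_assoc, ih, mul_assoc,
      ypow_mul_shift h y lam hy (a + m) s, ← mul_assoc]
    congr 3
    ring

/-- If `he − eh = e` and `hy − yh = λ·y`, then
`(y^s ⊗ 1) · F_a = F_{a−sλ} · (y^s ⊗ 1)` in `(A ⊗ A)[[t]]`. -/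
theorem tmul_pow_mul_capF {F A : Type*} [Field F] [CharZero F] [Ring A] [Algebra F A]
    (h e : A) (he : h * e - e * h = e)
    (y : A) (lam : F) (hy : h * y - y * h = lam • y) (a : F) (s : ℕ) :
    PowerSeries.C (R := A ⊗[F] A) ((y ^ s) ⊗ₜ[F] (1 : A)) * capF h e a =
      capF h e (a - (s : F) * lam) * PowerSeries.C (R := A ⊗[F] A) ((y ^ s) ⊗ₜ[F] (1 : A)) := by
  ext r
  rw [PowerSeries.coeff_C_mul, PowerSeries.coeff_mul_C]
  simp only [capF, PowerSeries.coeff_mk, mul_smul_comm, smul_mul_assoc]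
  congr 1
  exact ((SemiconjBy.tmul (R := F) (ypow_mul_risePow h y lam hy a s r)
    (SemiconjBy.one_left e)).pow_right r).eq
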